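/- In the setting of a two-sided hypersurface f : Mⁿ → I ×_ρ Pⁿ with height function h, angle function Θ, Newton tensors P_k, and 𝓗 = ρ'/ρ, suppose H_k ≠ 0 and set P̂_k = P_k/H_k, L̂_k = trace(P̂_k ∘ hess). Then with σ(t) = ∫_{t₀}^t ρ(s) ds, one has L̂_k σ(h) = c_k ρ(h)(𝓗(h) + Θ·H_{k+1}/H_k), where c_k = (n−k)·binom(n,k). -/

import Mathlib

open RealInnerProductSpace

/-- pointwise formalization of Lemma on `L̂_k σ(h)`: on the tangent space
`V` of the hypersurface at a point, with `g = grad h`, shape operator `A`, Newton tensor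
`P_k` satisfying `trace P_k = c_k H_k` and `trace (P_k∘A) = c_k H_{k+1}`, the Hessian
formula `hess h(X) = 𝓗(X − ⟨X,g⟩g) + Θ·A X` and the chain rule
`hess σ(h)(X) = ρ·hess h(X) + ρ'⟨g,X⟩g` with `ρ' = 𝓗ρ`, and `H_k ≠ 0`, one gets
`trace ((P_k/H_k) ∘ hess σ(h)) = c_k ρ (𝓗 + Θ·H_{k+1}/H_k)`. -/
theorem stmt_12 {V : Type*} [NormedAddCommGroup V] [InnerProductSpace ℝ V]
    [FiniteDimensional ℝ V] (n k : ℕ) (hkn : k ≤ n)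
    (g : V) (A Pk hessh hessσ : V →ₗ[ℝ] V)
    (𝓗 Θ ρ ρ' Hk Hk1 ck : ℝ)
    (hck : ck = ((n : ℝ) - k) * (n.choose k))
    (hAsymm : A.IsSymmetric) (hPksymm : Pk.IsSymmetric)
    (hHk : Hk ≠ 0) (hρpos : 0 < ρ) (hρ' : ρ' = 𝓗 * ρ)
    (hhess : ∀ X : V, hessh X = 𝓗 • (X - ⟪X, g⟫ • g) + Θ • A X)
    (htrPk : LinearMap.trace ℝ V Pk = ck * Hk)
    (htrPkA : LinearMap.trace ℝ V (Pk ∘ₗ A) = ck * Hk1)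
    (hchain : ∀ X : V, hessσ X = ρ • hessh X + (ρ' * ⟪g, X⟫) • g) :
    LinearMap.trace ℝ V ((Hk⁻¹ • Pk) ∘ₗ hessσ) = ck * ρ * (𝓗 + Θ * (Hk1 / Hk)) := by
  have hσ : hessσ = (ρ * 𝓗) • LinearMap.id + (ρ * Θ) • A := by
    ext X
    rw [hchain, hhess, hρ', real_inner_comm g X]
    simp only [LinearMap.add_apply, LinearMap.smul_apply, LinearMap.id_apply,
      smul_sub, smul_smul, smul_add]
    module
  rw [hσ]
  simp only [LinearMap.comp_add, LinearMap.comp_smul, LinearMap.smul_comp, map_add, map_smul,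
    LinearMap.comp_id, htrPk, htrPkA, smul_eq_mul]
  field_simp
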